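/- For every z ∈ ℂ with Re(z) ≤ 0 and 1 − z/4 + z²/48 ≠ 0, the modulus of R(z) = (1 + z/4 + z²/48)/(1 − z/4 + z²/48) satisfies |R(z)| ≤ 1. -/

import Mathlib

theorem stmt_12 (z : ℂ) (hre : z.re ≤ 0) (hden : 1 - z/4 + z^2/48 ≠ 0) :
    ‖(1 + z/4 + z^2/48) / (1 - z/4 + z^2/48)‖ ≤ 1 := by
  rw [norm_div, div_le_one (norm_pos_iff.mpr hden)]
  rw [Complex.norm_def, Complex.norm_def]
  apply Real.sqrt_le_sqrt
  simp only [Complex.normSq_apply, Complex.add_re, Complex.add_im, Complex.sub_re,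
    Complex.sub_im, Complex.one_re, Complex.one_im, Complex.div_re, Complex.div_im,
    Complex.re_ofNat, Complex.im_ofNat]
  set x := z.re
  set y := z.im
  have h : (z^2).re = x^2 - y^2 := by rw [pow_two, Complex.mul_re]; ring
  have h2 : (z^2).im = 2*x*y := by rw [pow_two, Complex.mul_im]; ring
  rw [h, h2]
  nlinarith [sq_nonneg x, sq_nonneg y, mul_nonneg (neg_nonneg.2 hre) (sq_nonneg x),
    mul_nonneg (neg_nonneg.2 hre) (sq_nonneg y)]
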